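/- The map from S² to the ordered configuration space F₂(S²) given by x ↦ (x, −x) is a continuous map and is a homotopy equivalence. -/

import Mathlib

noncomputable section

open Metric

abbrev E3 := EuclideanSpace ℝ (Fin 3)
abbrev S2 := Metric.sphere (0 : E3) 1

/-- Ordered configuration space. -/
def Conf (n : ℕ) (Y : Type*) [TopologicalSpace Y] : Type _ :=
  {y : Fin n → Y // Function.Injective y}

instance (n : ℕ) (Y : Type*) [TopologicalSpace Y] : TopologicalSpace (Conf n Y) :=
  instTopologicalSpaceSubtype

/-- The setoid on `Conf n Y` given by the permutation action. -/
def permSetoid (n : ℕ) (Y : Type*) [TopologicalSpace Y] : Setoid (Conf n Y) where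
  r a b := ∃ σ : Equiv.Perm (Fin n), b.1 = a.1 ∘ σ
  iseqv := by
    constructor
    · exact fun a => ⟨1, by ext i; simp⟩
    · rintro a b ⟨σ, h⟩
      exact ⟨σ⁻¹, by ext i; simp [h]⟩
    · rintro a b c ⟨σ, h⟩ ⟨τ, h'⟩
      exact ⟨σ * τ, by ext i; simp [h', h]⟩

/-- Unordered configuration space. -/
def UConf (n : ℕ) (Y : Type*) [TopologicalSpace Y] : Type _ :=
  Quotient (permSetoid n Y)

instance (n : ℕ) (Y : Type*) [TopologicalSpace Y] : TopologicalSpace (UConf n Y) :=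
  instTopologicalSpaceQuotient

lemma S2.ne_neg (x : S2) : (x : E3) ≠ -(x : E3) := by
  intro h
  have hx : (x : E3) = 0 := by
    have h2 : (x : E3) + (x : E3) = 0 := by
      nth_rewrite 2 [h]; simp
    have h3 : (2 : ℝ) • (x : E3) = 0 := by rw [two_smul]; exact h2
    have := smul_eq_zero.mp h3
    simpa using this
  have := x.2
  rw [mem_sphere_zero_iff_norm] at this
  rw [hx] at this
  simp at this

/-- The antipodal setoid on the sphere. -/
def antipodalSetoid : Setoid S2 where
  r x y := (x : E3) = y ∨ (x : E3) = -y
  iseqv := by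
    constructor
    · exact fun x => Or.inl rfl
    · rintro x y (h | h)
      · exact Or.inl h.symm
      · exact Or.inr (by rw [h]; simp)
    · rintro x y z (h | h) (h' | h')
      · exact Or.inl (h.trans h')
      · exact Or.inr (by rw [h, h'])
      · exact Or.inr (by rw [h, h'])
      · exact Or.inl (by rw [h, h']; simp)

/-- The real projective plane, as the quotient of the sphere by the antipodal map. -/
def RP2 : Type _ := Quotient antipodalSetoid

instance : TopologicalSpace RP2 := instTopologicalSpaceQuotient

/-- The canonical projection from the sphere to the projective plane. -/
def pS2 : S2 → RP2 := Quotient.mk antipodalSetoid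

lemma pS2.continuous : Continuous pS2 := continuous_quotient_mk'

/-- The underlying vector of the map `U_P`. -/
def Uvec (P x : E3) : E3 := (2 * inner ℝ P x : ℝ) • x - P

lemma Uvec.norm_eq (P x : E3) (hP : ‖P‖ = 1) (hx : ‖x‖ = 1) : ‖Uvec P x‖ = 1 := by
  have h1 : ‖Uvec P x‖ ^ 2 = 1 := by
    rw [Uvec, norm_sub_sq_real, norm_smul, real_inner_smul_left, real_inner_comm x P, hx, hP,
      Real.norm_eq_abs, mul_one, one_pow, sq_abs]
    ring
  nlinarith [norm_nonneg (Uvec P x)]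

lemma Uvec.neg (P x : E3) : Uvec P (-x) = Uvec P x := by
  simp [Uvec, inner_neg_right]

/-- The map `U_P` on the sphere. -/
def USph (P x : S2) : S2 :=
  ⟨Uvec P.1 x.1, by
    rw [mem_sphere_zero_iff_norm]
    exact Uvec.norm_eq _ _ (by simp [← mem_sphere_zero_iff_norm, P.2])
      (by simp [← mem_sphere_zero_iff_norm, x.2])⟩

lemma USph.continuous (P : S2) : Continuous (USph P) := by
  apply Continuous.subtype_mk
  apply Continuous.sub
  · exact (continuous_const.mul (Continuous.inner (𝕜 := ℝ) continuous_const continuous_subtype_val)).smul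
      continuous_subtype_val
  · exact continuous_const

/-- The map `W_P` on the projective plane. -/
def WP (P : S2) : RP2 → RP2 :=
  Quotient.lift (fun x => pS2 (USph P x)) (by
    rintro a b (h | h)
    · have hab : a = b := Subtype.ext h
      show pS2 (USph P a) = pS2 (USph P b)
      rw [hab]
    · have hab : USph P a = USph P b :=
        Subtype.ext (show Uvec P.1 a.1 = Uvec P.1 b.1 by rw [h, Uvec.neg])
      show pS2 (USph P a) = pS2 (USph P b)
      rw [hab])

lemma WP.continuous (P : S2) : Continuous (WP P) :=
  Continuous.quotient_lift (pS2.continuous.comp (USph.continuous P)) _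

/-- `W_P` as a continuous map. -/
def WPc (P : S2) : C(RP2, RP2) := ⟨WP P, WP.continuous P⟩

lemma WPc_apply (P : S2) (x : S2) : WPc P (pS2 x) = pS2 (USph P x) := rfl

lemma S2.ne_neg' (x : S2) : x ≠ -x := fun h => S2.ne_neg x (congrArg Subtype.val h)

/-- The map `x ↦ (x, -x)` into the ordered configuration space `F₂(S²)`. -/
def pairMap (x : S2) : Conf 2 S2 :=
  ⟨![x, -x], by
    intro i j hij
    fin_cases i <;> fin_cases j <;> simp_all
    · exact S2.ne_neg' x hij
    · exact S2.ne_neg' x hij.symm⟩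

namespace StmtAux

lemma norm_one (x : S2) : ‖(x : E3)‖ = 1 := mem_sphere_zero_iff_norm.mp x.2

/-- The interpolation vector. -/
def vvec (t : ℝ) (x y : E3) : E3 := (1 - t) • y - t • x

lemma vvec_ne_zero {t : ℝ} (ht0 : 0 ≤ t) (ht1 : t ≤ 1) {x y : E3}
    (hx : ‖x‖ = 1) (hy : ‖y‖ = 1) (hxy : x ≠ y) : vvec t x y ≠ 0 := by
  intro h
  have h1 : (1 - t) • y = t • x := sub_eq_zero.mp h
  have h2 : |1 - t| = |t| := by
    have := congrArg norm h1
    rwa [norm_smul, norm_smul, hx, hy, mul_one, mul_one, Real.norm_eq_abs,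
      Real.norm_eq_abs] at this
  have ht : t = 1 / 2 := by
    rw [abs_of_nonneg (by linarith), abs_of_nonneg ht0] at h2; linarith
  apply hxy
  subst ht
  have h3 : (1 / 2 : ℝ) • y = (1 / 2 : ℝ) • x := by
    convert h1 using 2 <;> norm_num
  exact (smul_right_injective E3 (by norm_num : (1 / 2 : ℝ) ≠ 0) h3).symm

lemma x_ne_gvec {t : ℝ} (ht0 : 0 ≤ t) (ht1 : t ≤ 1) {x y : E3}
    (hx : ‖x‖ = 1) (hy : ‖y‖ = 1) (hxy : x ≠ y) :
    x ≠ ‖vvec t x y‖⁻¹ • vvec t x y := by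
  intro h
  set v := vvec t x y with hv
  have hvne : v ≠ 0 := vvec_ne_zero ht0 ht1 hx hy hxy
  have hn : 0 < ‖v‖ := norm_pos_iff.mpr hvne
  have h1 : ‖v‖ • x = v := by
    rw [h, smul_smul, mul_inv_cancel₀ (ne_of_gt hn), one_smul]
  have h2 : (‖v‖ + t) • x = (1 - t) • y := by
    rw [add_smul, h1, hv]; unfold vvec; abel
  have h3 : ‖v‖ + t = 1 - t := by
    have := congrArg norm h2
    rw [norm_smul, norm_smul, hx, hy, mul_one, mul_one, Real.norm_eq_abs,
      Real.norm_eq_abs, abs_of_nonneg (by positivity), abs_of_nonneg (by linarith)] at this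
    exact this
  have hpos : 0 < 1 - t := by linarith
  apply hxy
  rw [h3] at h2
  exact smul_right_injective E3 (ne_of_gt hpos) h2

/-- The point on the sphere at the second slot of the homotopy. -/
def gmap (p : unitInterval × Conf 2 S2) : S2 :=
  ⟨‖vvec p.1 (p.2.1 0 : E3) (p.2.1 1 : E3)‖⁻¹ • vvec p.1 (p.2.1 0 : E3) (p.2.1 1 : E3), by
    have hxy : (p.2.1 0 : E3) ≠ (p.2.1 1 : E3) := by
      intro h
      have := p.2.2 (Subtype.ext h)
      simp at this
    have hvne : vvec p.1 (p.2.1 0 : E3) (p.2.1 1 : E3) ≠ 0 :=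
      vvec_ne_zero p.1.2.1 p.1.2.2 (norm_one _) (norm_one _) hxy
    rw [mem_sphere_zero_iff_norm, norm_smul, norm_inv, norm_norm,
      inv_mul_cancel₀ (norm_ne_zero_iff.mpr hvne)]⟩

lemma conf_ne (c : Conf 2 S2) : (c.1 0 : E3) ≠ (c.1 1 : E3) := by
  intro h
  have := c.2 (Subtype.ext h)
  simp at this

/-- The homotopy map. -/
def Hmap (p : unitInterval × Conf 2 S2) : Conf 2 S2 :=
  ⟨![p.2.1 0, gmap p], by
    have key : p.2.1 0 ≠ gmap p := by
      intro h
      exact x_ne_gvec p.1.2.1 p.1.2.2 (norm_one _) (norm_one _) (conf_ne p.2)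
        (congrArg Subtype.val h)
    intro i j hij
    fin_cases i <;> fin_cases j <;> simp_all⟩

lemma gmap_continuous : Continuous gmap := by
  apply Continuous.subtype_mk
  have hv : Continuous fun p : unitInterval × Conf 2 S2 =>
      vvec p.1 (p.2.1 0 : E3) (p.2.1 1 : E3) := by
    unfold vvec
    have hx : Continuous fun p : unitInterval × Conf 2 S2 => (p.2.1 0 : E3) :=
      continuous_subtype_val.comp
        (((continuous_apply (0 : Fin 2)).comp continuous_subtype_val).comp continuous_snd)
    have hy : Continuous fun p : unitInterval × Conf 2 S2 => (p.2.1 1 : E3) :=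
      continuous_subtype_val.comp
        (((continuous_apply (1 : Fin 2)).comp continuous_subtype_val).comp continuous_snd)
    have ht : Continuous fun p : unitInterval × Conf 2 S2 => (p.1 : ℝ) :=
      continuous_subtype_val.comp continuous_fst
    exact ((continuous_const.sub ht).smul hy).sub (ht.smul hx)
  have hvne : ∀ p : unitInterval × Conf 2 S2,
      vvec p.1 (p.2.1 0 : E3) (p.2.1 1 : E3) ≠ 0 := fun p =>
    vvec_ne_zero p.1.2.1 p.1.2.2 (norm_one _) (norm_one _) (conf_ne p.2)
  exact ((hv.norm.inv₀ fun p => norm_ne_zero_iff.mpr (hvne p)).smul hv)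

lemma Hmap_continuous : Continuous Hmap := by
  apply Continuous.subtype_mk
  apply continuous_pi
  intro i
  fin_cases i
  · simpa using (show Continuous fun p : unitInterval × Conf 2 S2 => p.2.1 0 from
      ((continuous_apply (0 : Fin 2)).comp continuous_subtype_val).comp continuous_snd)
  · simpa using gmap_continuous

lemma pairMap_continuous : Continuous pairMap := by
  apply Continuous.subtype_mk
  apply continuous_pi
  intro i
  have hneg : Continuous fun x : S2 => (-x : S2) := by
    apply Continuous.subtype_mk
    exact continuous_subtype_val.neg
  fin_cases i
  · simpa using (show Continuous fun x : S2 => x from continuous_id)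
  · simpa using hneg

/-- `pairMap` as a continuous map. -/
def pmC : C(S2, Conf 2 S2) := ⟨pairMap, pairMap_continuous⟩

/-- Projection onto the first point. -/
def projC : C(Conf 2 S2, S2) :=
  ⟨fun c => c.1 0, (continuous_apply (0 : Fin 2)).comp continuous_subtype_val⟩

lemma Hmap_zero (c : Conf 2 S2) : Hmap (0, c) = c := by
  apply Subtype.ext
  funext i
  fin_cases i
  · rfl
  · show gmap (0, c) = c.1 1
    apply Subtype.ext
    show ‖vvec ((0 : unitInterval) : ℝ) _ _‖⁻¹ • vvec ((0 : unitInterval) : ℝ) _ _ = _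
    have : vvec ((0 : unitInterval) : ℝ) (c.1 0 : E3) (c.1 1 : E3) = (c.1 1 : E3) := by
      simp [vvec]
    rw [this, norm_one, inv_one, one_smul]

lemma Hmap_one (c : Conf 2 S2) : Hmap (1, c) = pairMap (c.1 0) := by
  apply Subtype.ext
  funext i
  fin_cases i
  · rfl
  · show gmap (1, c) = -(c.1 0)
    apply Subtype.ext
    show ‖vvec ((1 : unitInterval) : ℝ) _ _‖⁻¹ • vvec ((1 : unitInterval) : ℝ) _ _ = _
    have hv : vvec ((1 : unitInterval) : ℝ) (c.1 0 : E3) (c.1 1 : E3) = -(c.1 0 : E3) := by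
      simp [vvec]
    rw [hv]
    have hcoe : ((-(c.1 0) : S2) : E3) = -(c.1 0 : E3) := rfl
    rw [hcoe, norm_neg, norm_one, inv_one, one_smul]

/-- The homotopy from the identity to `pairMap ∘ proj`. -/
def Hhtpy : ContinuousMap.Homotopy (ContinuousMap.id (Conf 2 S2)) (pmC.comp projC) where
  toFun := Hmap
  continuous_toFun := Hmap_continuous
  map_zero_left := Hmap_zero
  map_one_left := Hmap_one

end StmtAux

/-- The map `x ↦ (x, -x)` from `S²` to the ordered configuration space `F₂(S²)`
is continuous and is a homotopy equivalence. -/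
theorem stmt1 :
    Continuous pairMap ∧
    ∃ e : ContinuousMap.HomotopyEquiv S2 (Conf 2 S2), ∀ x : S2, e.toFun x = pairMap x := by
  refine ⟨StmtAux.pairMap_continuous, ⟨{
    toFun := StmtAux.pmC
    invFun := StmtAux.projC
    left_inv := ?_
    right_inv := ?_ }, fun x => rfl⟩⟩
  · have h : StmtAux.projC.comp StmtAux.pmC = ContinuousMap.id S2 := by
      ext x; rfl
    rw [h]
  · exact ⟨StmtAux.Hhtpy.symm⟩
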